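/- In the classical Dynkin game with f ≥ g, using non-anticipative strategies for the outer players does not change the value: inf_{ρ∈𝕋^{ii}} sup_{τ∈𝒯} E[f_{ρ(τ)} 1_{ρ(τ)<τ} + g_τ 1_{ρ(τ)≥τ}] = sup_{τ∈𝕋^{i}} inf_{ρ∈𝒯} E[f_ρ 1_{ρ<τ(ρ)} + g_{τ(ρ)} 1_{ρ≥τ(ρ)}] = inf_{ρ∈𝒯} sup_{τ∈𝒯} E[f_ρ 1_{ρ<τ} + g_τ 1_{ρ≥τ}] = sup_{τ∈𝒯} inf_{ρ∈𝒯} E[f_ρ 1_{ρ<τ} + g_τ 1_{ρ≥τ}]. -/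

import Mathlib

open MeasureTheory
open scoped Classical

namespace Stmt17Aux

variable {Ω : Type*} {m : MeasurableSpace Ω}

noncomputable def snell (μ : Measure Ω) (ℱ : Filtration ℕ m) (T : ℕ) (f g : ℕ → Ω → ℝ) :
    ℕ → Ω → ℝ
  | 0 => g T
  | (k+1) => fun ω =>
      max (g (T - (k+1)) ω) (min (f (T - (k+1)) ω) ((μ[snell μ ℱ T f g k | ℱ (T - (k+1))]) ω))

noncomputable def W (μ : Measure Ω) (ℱ : Filtration ℕ m) (T : ℕ) (f g : ℕ → Ω → ℝ) (t : ℕ) :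
    Ω → ℝ := snell μ ℱ T f g (T - t)

variable {μ : Measure Ω} {ℱ : Filtration ℕ m} {T : ℕ} {f g : ℕ → Ω → ℝ}

lemma W_apply_T : W μ ℱ T f g T = g T := by
  unfold W; simp [snell, Nat.sub_self]

lemma W_succ {t : ℕ} (ht : t < T) :
    W μ ℱ T f g t = fun ω =>
      max (g t ω) (min (f t ω) ((μ[W μ ℱ T f g (t+1) | ℱ t]) ω)) := by
  have h1 : T - t = (T - (t+1)) + 1 := by omega
  have h2 : T - ((T - (t+1)) + 1) = t := by omega
  unfold W
  rw [h1]
  show snell μ ℱ T f g ((T - (t+1)) + 1) = _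
  simp only [snell, h2]

lemma snell_sm (hfm : ∀ t, StronglyMeasurable[ℱ t] (f t))
    (hgm : ∀ t, StronglyMeasurable[ℱ t] (g t)) (k : ℕ) :
    StronglyMeasurable[ℱ (T - k)] (snell μ ℱ T f g k) := by
  cases k with
  | zero => simpa [snell] using hgm T
  | succ k =>
    exact (((hgm _).measurable.max
      ((hfm _).measurable.min (stronglyMeasurable_condExp.measurable))).stronglyMeasurable)

lemma W_adapted (hfm : ∀ t, StronglyMeasurable[ℱ t] (f t))
    (hgm : ∀ t, StronglyMeasurable[ℱ t] (g t)) :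
    StronglyAdapted ℱ (W μ ℱ T f g) := fun t =>
  (snell_sm hfm hgm (T - t)).mono (ℱ.mono (by omega))

lemma integrable_of_bdd [IsFiniteMeasure μ] {h : Ω → ℝ} {C : ℝ}
    (hm : AEStronglyMeasurable h μ) (hb : ∀ᵐ ω ∂μ, |h ω| ≤ C) : Integrable h μ :=
  ⟨hm, HasFiniteIntegral.of_bounded (C := C) (by simpa [Real.norm_eq_abs] using hb)⟩

lemma snell_int [IsFiniteMeasure μ] (hfm : ∀ t, StronglyMeasurable[ℱ t] (f t))
    (hgm : ∀ t, StronglyMeasurable[ℱ t] (g t)) {C : ℝ} (hC0 : 0 ≤ C)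
    (hb : ∀ t ω, |f t ω| ≤ C ∧ |g t ω| ≤ C) (k : ℕ) :
    Integrable (snell μ ℱ T f g k) μ ∧ ∀ᵐ ω ∂μ, |snell μ ℱ T f g k ω| ≤ C := by
  induction k with
  | zero =>
    have hbd : ∀ᵐ ω ∂μ, |snell μ ℱ T f g 0 ω| ≤ C :=
      ae_of_all _ fun ω => (hb T ω).2
    exact ⟨integrable_of_bdd
      (((snell_sm hfm hgm 0).mono (ℱ.le _)).aestronglyMeasurable) hbd, hbd⟩
  | succ k ih =>
    have hcb : ∀ᵐ ω ∂μ, |(μ[snell μ ℱ T f g k | ℱ (T - (k+1))]) ω| ≤ C := by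
      have := ae_bdd_condExp_of_ae_bdd (m := ℱ (T - (k+1))) (μ := μ) (R := ⟨C, hC0⟩)
        (by exact ih.2)
      exact this
    have hbd : ∀ᵐ ω ∂μ, |snell μ ℱ T f g (k+1) ω| ≤ C := by
      filter_upwards [hcb] with ω hc
      simp only [snell]
      rw [abs_le]
      constructor
      · exact le_trans (abs_le.mp (hb _ ω).2).1 (le_max_left _ _)
      · exact max_le (abs_le.mp (hb _ ω).2).2
          (le_trans (min_le_right _ _) (abs_le.mp hc).2)
    exact ⟨integrable_of_bdd
      (((snell_sm hfm hgm (k+1)).mono (ℱ.le _)).aestronglyMeasurable) hbd, hbd⟩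

lemma g_le_W {t : ℕ} (ht : t ≤ T) (ω : Ω) : g t ω ≤ W μ ℱ T f g t ω := by
  rcases lt_or_eq_of_le ht with h | h
  · simp only [W_succ h]; exact le_max_left _ _
  · subst h; rw [W_apply_T]

lemma W_le_f (hfg : ∀ t, g t ≤ᵐ[μ] f t) {t : ℕ} (ht : t ≤ T) :
    W μ ℱ T f g t ≤ᵐ[μ] f t := by
  rcases lt_or_eq_of_le ht with h | h
  · filter_upwards [hfg t] with ω hω
    simp only [W_succ h]
    exact max_le hω (min_le_left _ _)
  · subst h; rw [W_apply_T]; exact hfg _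

lemma W_le_condexp {t : ℕ} (ht : t < T) (ω : Ω) (h : g t ω < W μ ℱ T f g t ω) :
    W μ ℱ T f g t ω ≤ (μ[W μ ℱ T f g (t+1) | ℱ t]) ω := by
  simp only [W_succ ht] at h ⊢
  rcases max_cases (g t ω) (min (f t ω) ((μ[W μ ℱ T f g (t+1) | ℱ t]) ω)) with
    ⟨he, _⟩ | ⟨he, _⟩
  · rw [he] at h; exact absurd h (lt_irrefl _)
  · rw [he]; exact min_le_right _ _

lemma condExp_le_W {t : ℕ} (ht : t < T) (ω : Ω) (hgf : g t ω ≤ f t ω)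
    (h : W μ ℱ T f g t ω < f t ω) :
    (μ[W μ ℱ T f g (t+1) | ℱ t]) ω ≤ W μ ℱ T f g t ω := by
  simp only [W_succ ht] at h ⊢
  rcases le_total ((μ[W μ ℱ T f g (t+1) | ℱ t]) ω) (f t ω) with he | he
  · rw [min_eq_right he] at h ⊢; exact le_max_right _ _
  · rw [min_eq_left he, max_eq_right hgf] at h; exact absurd h (lt_irrefl _)

noncomputable def hit (P : ℕ → Ω → Prop) (T : ℕ) : Ω → ℕ := fun ω => sInf {t | T ≤ t ∨ P t ω}

lemma hit_le (P : ℕ → Ω → Prop) (N : ℕ) (ω : Ω) : hit P N ω ≤ N :=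
  Nat.sInf_le (Or.inl le_rfl)

lemma hit_spec (P : ℕ → Ω → Prop) (N : ℕ) (ω : Ω) : N ≤ hit P N ω ∨ P (hit P N ω) ω := by
  have h := Nat.sInf_mem (s := {t | N ≤ t ∨ P t ω}) ⟨N, Or.inl le_rfl⟩
  exact h

lemma lt_hit {P : ℕ → Ω → Prop} {T t : ℕ} {ω : Ω} (h : t < hit P T ω) : t < T ∧ ¬ P t ω := by
  have h2 := Nat.notMem_of_lt_sInf h
  simp only [Set.mem_setOf_eq, not_or, not_le] at h2
  exact h2

lemma bddA {ι : Sort*} (F : ι → ℝ) {C : ℝ} (h : ∀ i, F i ≤ C) : BddAbove (Set.range F) :=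
  ⟨C, by rintro x ⟨i, rfl⟩; exact h i⟩

lemma bddB {ι : Sort*} (F : ι → ℝ) {C : ℝ} (h : ∀ i, -C ≤ F i) : BddBelow (Set.range F) :=
  ⟨-C, by rintro x ⟨i, rfl⟩; exact h i⟩

lemma hit_isStoppingTime {ℱ : Filtration ℕ m} {P : ℕ → Ω → Prop} {T : ℕ}
    (hP : ∀ t, MeasurableSet[ℱ t] {ω | P t ω}) :
    IsStoppingTime ℱ (fun ω => (hit P T ω : WithTop ℕ)) := by
  intro n
  suffices key : MeasurableSet[ℱ n] {ω | hit P T ω ≤ n} by simpa using key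
  have heq : {ω | hit P T ω ≤ n} = ⋃ t ∈ Set.Iic n, {ω | T ≤ t ∨ P t ω} := by
    ext ω
    simp only [Set.mem_setOf_eq, Set.mem_iUnion, Set.mem_Iic, exists_prop]
    constructor
    · intro h
      have h2 := Nat.sInf_mem (s := {t | T ≤ t ∨ P t ω}) ⟨T, Or.inl le_rfl⟩
      exact ⟨hit P T ω, h, h2⟩
    · rintro ⟨t, htn, ht⟩
      exact le_trans (Nat.sInf_le ht) htn
  rw [heq]
  refine MeasurableSet.biUnion (Set.to_countable _) fun t ht => ?_
  have h3 : {ω : Ω | T ≤ t ∨ P t ω} = {ω : Ω | T ≤ t} ∪ {ω | P t ω} := rfl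
  rw [h3]
  exact ℱ.mono ht _ ((MeasurableSet.const _).union (hP t))

lemma st_eq {ℱ : Filtration ℕ m} {σ : Ω → ℕ}
    (hσ : IsStoppingTime ℱ (fun ω => (σ ω : WithTop ℕ))) (i : ℕ) :
    MeasurableSet[ℱ i] {ω | σ ω = i} := by
  have := hσ.measurableSet_eq i
  simpa using this

lemma st_le {ℱ : Filtration ℕ m} {σ : Ω → ℕ}
    (hσ : IsStoppingTime ℱ (fun ω => (σ ω : WithTop ℕ))) (i : ℕ) :
    MeasurableSet[ℱ i] {ω | σ ω ≤ i} := by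
  have := hσ i
  simpa using this

lemma sp_apply {β : Type*} (u : ℕ → Ω → β) (τ : Ω → ℕ) (i : ℕ) (ω : Ω) :
    stoppedProcess u (fun ω => (τ ω : WithTop ℕ)) i ω = u (min i (τ ω)) ω := rfl

lemma sv_apply {β : Type*} (u : ℕ → Ω → β) (τ : Ω → ℕ) (ω : Ω) :
    stoppedValue u (fun ω => (τ ω : WithTop ℕ)) ω = u (τ ω) ω := rfl

end Stmt17Aux

/-- Classical Dynkin game with `f ≥ g`: using non-anticipative strategies for the outer
players does not change the value, and the game with stopping times has a value. -/
theorem stmt_17 {Ω : Type*} {m : MeasurableSpace Ω} {μ : Measure Ω} [IsProbabilityMeasure μ]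
    (ℱ : Filtration ℕ m) (T : ℕ)
    (f g : ℕ → Ω → ℝ)
    (hfmeas : ∀ t, StronglyMeasurable[ℱ t] (f t))
    (hgmeas : ∀ t, StronglyMeasurable[ℱ t] (g t))
    (hbdd : ∃ C, ∀ t ω, |f t ω| ≤ C ∧ |g t ω| ≤ C)
    (hfg : ∀ t, g t ≤ᵐ[μ] f t)
    (𝒯 : Set (Ω → ℕ))
    (h𝒯 : 𝒯 = {σ : Ω → ℕ | IsStoppingTime ℱ (fun ω => (σ ω : WithTop ℕ)) ∧ ∀ ω, σ ω ≤ T})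
    (TypeI TypeII : ((Ω → ℕ) → Ω → ℕ) → Prop)
    (hTypeI : ∀ ρ, TypeI ρ ↔ ((∀ σ ∈ 𝒯, ρ σ ∈ 𝒯) ∧ ∀ σ₁ ∈ 𝒯, ∀ σ₂ ∈ 𝒯, ∀ ω,
      (ρ σ₁ ω = ρ σ₂ ω ∧ ρ σ₁ ω ≤ min (σ₁ ω) (σ₂ ω)) ∨
        min (σ₁ ω) (σ₂ ω) < min (ρ σ₁ ω) (ρ σ₂ ω)))
    (hTypeII : ∀ ρ, TypeII ρ ↔ ((∀ σ ∈ 𝒯, ρ σ ∈ 𝒯) ∧ ∀ σ₁ ∈ 𝒯, ∀ σ₂ ∈ 𝒯, ∀ ω,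
      (ρ σ₁ ω = ρ σ₂ ω ∧ ρ σ₁ ω < min (σ₁ ω) (σ₂ ω)) ∨
        min (σ₁ ω) (σ₂ ω) ≤ min (ρ σ₁ ω) (ρ σ₂ ω)))
    (D : (Ω → ℕ) → (Ω → ℕ) → ℝ)
    (hD : ∀ ρ τ, D ρ τ = ∫ ω, (if ρ ω < τ ω then f (ρ ω) ω else g (τ ω) ω) ∂μ) :
    (⨅ ρ : {ρ : (Ω → ℕ) → Ω → ℕ // TypeII ρ}, ⨆ τ : 𝒯, D (ρ.1 τ.1) τ.1) =
      (⨅ ρ : 𝒯, ⨆ τ : 𝒯, D ρ.1 τ.1) ∧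
    (⨆ τ : {τ : (Ω → ℕ) → Ω → ℕ // TypeI τ}, ⨅ ρ : 𝒯, D ρ.1 (τ.1 ρ.1)) =
      (⨅ ρ : 𝒯, ⨆ τ : 𝒯, D ρ.1 τ.1) ∧
    (⨅ ρ : 𝒯, ⨆ τ : 𝒯, D ρ.1 τ.1) = (⨆ τ : 𝒯, ⨅ ρ : 𝒯, D ρ.1 τ.1) := by
  classical
  obtain ⟨C₀, hC₀⟩ := hbdd
  set C : ℝ := max C₀ 0 with hCdef
  have hC0 : (0:ℝ) ≤ C := le_max_right _ _
  have hb : ∀ t ω, |f t ω| ≤ C ∧ |g t ω| ≤ C := fun t ω =>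
    ⟨(hC₀ t ω).1.trans (le_max_left _ _), (hC₀ t ω).2.trans (le_max_left _ _)⟩
  have hmemT : ∀ {σ : Ω → ℕ}, σ ∈ 𝒯 → IsStoppingTime ℱ (fun ω => (σ ω : WithTop ℕ)) ∧ ∀ ω, σ ω ≤ T := by
    intro σ hσ; rwa [h𝒯] at hσ
  have hmemT' : ∀ {σ : Ω → ℕ}, IsStoppingTime ℱ (fun ω => (σ ω : WithTop ℕ)) → (∀ ω, σ ω ≤ T) → σ ∈ 𝒯 := by
    intro σ h1 h2; rw [h𝒯]; exact ⟨h1, h2⟩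
  have hzero_mem : (fun _ : Ω => 0) ∈ 𝒯 :=
    hmemT' (isStoppingTime_const ℱ 0) fun ω => Nat.zero_le T
  haveI hTne : Nonempty ↥𝒯 := ⟨⟨_, hzero_mem⟩⟩
  set payoff : (Ω → ℕ) → (Ω → ℕ) → Ω → ℝ :=
    fun ρ τ ω => if ρ ω < τ ω then f (ρ ω) ω else g (τ ω) ω with hpayoff
  have hD' : ∀ ρ τ, D ρ τ = ∫ ω, payoff ρ τ ω ∂μ := fun ρ τ => hD ρ τ
  have hpb : ∀ ρ τ ω, |payoff ρ τ ω| ≤ C := by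
    intro ρ τ ω
    by_cases h : ρ ω < τ ω
    · simp only [hpayoff, if_pos h]; exact (hb _ ω).1
    · simp only [hpayoff, if_neg h]; exact (hb _ ω).2
  have hDb : ∀ ρ τ, |D ρ τ| ≤ C := by
    intro ρ τ
    rw [hD' ρ τ]
    calc |∫ ω, payoff ρ τ ω ∂μ| ≤ C * (μ Set.univ).toReal := by
          rw [← Real.norm_eq_abs]
          exact norm_integral_le_of_norm_le_const (ae_of_all _ fun ω => by
            rw [Real.norm_eq_abs]; exact hpb ρ τ ω)
      _ = C := by simp
  have hDle : ∀ ρ τ, D ρ τ ≤ C := fun ρ τ => (abs_le.mp (hDb ρ τ)).2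
  have hDge : ∀ ρ τ, -C ≤ D ρ τ := fun ρ τ => (abs_le.mp (hDb ρ τ)).1
  have hst_meas : ∀ {σ : Ω → ℕ}, IsStoppingTime ℱ (fun ω => (σ ω : WithTop ℕ)) → Measurable σ := by
    intro σ hσ
    exact measurable_to_countable' fun i => ℱ.le i _ (Stmt17Aux.st_eq hσ i)
  have hsv_meas : ∀ (u : ℕ → Ω → ℝ), (∀ t, StronglyMeasurable[ℱ t] (u t)) →
      ∀ {σ : Ω → ℕ}, IsStoppingTime ℱ (fun ω => (σ ω : WithTop ℕ)) → (∀ ω, σ ω ≤ T) →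
      Measurable (fun ω => u (σ ω) ω) := by
    intro u hu σ hσ hσT
    have h1 : (fun ω => u (σ ω) ω) = stoppedValue u (fun ω => (σ ω : WithTop ℕ)) := rfl
    rw [h1, stoppedValue_eq (τ := fun ω => (σ ω : WithTop ℕ)) (N := T) (fun ω => WithTop.coe_le_coe.mpr (hσT ω))]
    simp only [Finset.sum_apply]
    refine Finset.measurable_sum (Finset.range (T+1)) fun i _ => ?_
    exact (((hu i).mono (ℱ.le i)).measurable).indicator (ℱ.le i _ (hσ.measurableSet_eq i))
  have hint_payoff : ∀ {ρ τ : Ω → ℕ}, ρ ∈ 𝒯 → τ ∈ 𝒯 → Integrable (payoff ρ τ) μ := by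
    intro ρ τ hρ hτ
    obtain ⟨hρ1, hρ2⟩ := hmemT hρ
    obtain ⟨hτ1, hτ2⟩ := hmemT hτ
    refine Stmt17Aux.integrable_of_bdd ?_ (ae_of_all _ fun ω => hpb ρ τ ω)
    have hmeas : Measurable (payoff ρ τ) := by
      simp only [hpayoff]
      exact Measurable.ite (measurableSet_lt (hst_meas hρ1) (hst_meas hτ1))
        (hsv_meas f hfmeas hρ1 hρ2) (hsv_meas g hgmeas hτ1 hτ2)
    exact hmeas.aestronglyMeasurable
  -- Snell envelope
  set W' := Stmt17Aux.W μ ℱ T f g with hW'def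
  have hWad : StronglyAdapted ℱ W' := Stmt17Aux.W_adapted hfmeas hgmeas
  have hWint : ∀ t, Integrable (W' t) μ := fun t =>
    (Stmt17Aux.snell_int hfmeas hgmeas hC0 hb (T - t)).1
  have hgW : ∀ t, t ≤ T → ∀ ω, g t ω ≤ W' t ω := fun t ht ω => Stmt17Aux.g_le_W ht ω
  have hWf : ∀ᵐ ω ∂μ, ∀ t, t ≤ T → W' t ω ≤ f t ω := by
    rw [ae_all_iff]
    intro t
    by_cases ht : t ≤ T
    · filter_upwards [Stmt17Aux.W_le_f hfg ht] with ω h _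
      exact h
    · exact ae_of_all _ fun ω h => absurd h ht
  -- the optimal stopping times
  set τs := Stmt17Aux.hit (fun t ω => W' t ω ≤ g t ω) T with hτsdef
  have hτs_st : IsStoppingTime ℱ (fun ω => (τs ω : WithTop ℕ)) :=
    Stmt17Aux.hit_isStoppingTime fun t =>
      measurableSet_le ((hWad t).measurable) ((hgmeas t).measurable)
  have hτs_le : ∀ ω, τs ω ≤ T := fun ω => Stmt17Aux.hit_le _ _ ω
  have hτs_mem : τs ∈ 𝒯 := hmemT' hτs_st hτs_le
  have hWτs : ∀ ω, W' (τs ω) ω = g (τs ω) ω := by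
    intro ω
    rcases Stmt17Aux.hit_spec (fun t ω => W' t ω ≤ g t ω) T ω with h | h
    · have hEq : τs ω = T := le_antisymm (hτs_le ω) h
      rw [hEq, hW'def, Stmt17Aux.W_apply_T]
    · exact le_antisymm h (hgW _ (hτs_le ω) ω)
  have hτs_lt : ∀ (t : ℕ) (ω : Ω), t < τs ω → t < T ∧ g t ω < W' t ω := by
    intro t ω h
    obtain ⟨h1, h2⟩ := Stmt17Aux.lt_hit h
    exact ⟨h1, not_le.mp h2⟩
  set ρs := Stmt17Aux.hit (fun t ω => f t ω ≤ W' t ω) T with hρsdef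
  have hρs_st : IsStoppingTime ℱ (fun ω => (ρs ω : WithTop ℕ)) :=
    Stmt17Aux.hit_isStoppingTime fun t =>
      measurableSet_le ((hfmeas t).measurable) ((hWad t).measurable)
  have hρs_le : ∀ ω, ρs ω ≤ T := fun ω => Stmt17Aux.hit_le _ _ ω
  have hρs_mem : ρs ∈ 𝒯 := hmemT' hρs_st hρs_le
  have hfρs : ∀ ω, ρs ω < T → f (ρs ω) ω ≤ W' (ρs ω) ω := by
    intro ω h
    rcases Stmt17Aux.hit_spec (fun t ω => f t ω ≤ W' t ω) T ω with h' | h'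
    · exact absurd h (not_lt.mpr h')
    · exact h'
  have hρs_lt : ∀ (t : ℕ) (ω : Ω), t < ρs ω → t < T ∧ W' t ω < f t ω := by
    intro t ω h
    obtain ⟨h1, h2⟩ := Stmt17Aux.lt_hit h
    exact ⟨h1, not_le.mp h2⟩
  -- submartingale up to τs
  set Y := MeasureTheory.stoppedProcess W' (fun ω => (τs ω : WithTop ℕ)) with hYdef
  have hYad : StronglyAdapted ℱ Y := StronglyAdapted.stoppedProcess_of_discrete hWad hτs_st
  have hYint : ∀ i, Integrable (Y i) μ := by
    intro i
    have h1 : Y i = stoppedValue W' fun ω => min (i : WithTop ℕ) (τs ω) := rfl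
    rw [h1]
    exact integrable_stoppedValue ℕ ((isStoppingTime_const ℱ i).min hτs_st) hWint
      (fun ω => min_le_left _ _)
  have hYstep : ∀ i, Y i ≤ᵐ[μ] μ[Y (i+1) | ℱ i] := by
    intro i
    have hind_meas : MeasurableSet[ℱ i] {ω | i < τs ω} := by
      have h1 := (Stmt17Aux.st_le hτs_st i).compl
      have h2 : {ω | τs ω ≤ i}ᶜ = {ω | i < τs ω} := by ext ω; simp [not_le]
      rwa [h2] at h1
    have hdiffint : Integrable (fun ω => W' (i+1) ω - W' i ω) μ :=
      (hWint (i+1)).sub (hWint i)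
    have hindint : Integrable ({ω | i < τs ω}.indicator fun ω => W' (i+1) ω - W' i ω) μ :=
      hdiffint.indicator (ℱ.le i _ hind_meas)
    have hdecomp : Y (i+1) = Y i + {ω | i < τs ω}.indicator
        fun ω => W' (i+1) ω - W' i ω := by
      funext ω
      by_cases h : i < τs ω
      · have h1 : min (i+1) (τs ω) = i + 1 := min_eq_left h
        have h2 : min i (τs ω) = i := min_eq_left h.le
        simp only [Pi.add_apply, hYdef, Stmt17Aux.sp_apply, h1, h2,
          Set.indicator_of_mem (show ω ∈ {ω | i < τs ω} from h)]
        ring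
      · push_neg at h
        have h1 : min (i+1) (τs ω) = τs ω := min_eq_right (by omega)
        have h2 : min i (τs ω) = τs ω := min_eq_right h
        simp only [Pi.add_apply, hYdef, Stmt17Aux.sp_apply, h1, h2,
          Set.indicator_of_notMem (show ω ∉ {ω | i < τs ω} by simp [not_lt.mpr h])]
        ring
    have hce : μ[Y (i+1) | ℱ i] =ᵐ[μ] fun ω => Y i ω +
        {ω | i < τs ω}.indicator (fun ω => (μ[W' (i+1) | ℱ i]) ω - W' i ω) ω := by
      rw [hdecomp]
      refine (condExp_add (hYint i) hindint (ℱ i)).trans ?_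
      have e1 : μ[Y i | ℱ i] = Y i :=
        condExp_of_stronglyMeasurable (ℱ.le i) (hYad i) (hYint i)
      have e2 : μ[{ω | i < τs ω}.indicator fun ω => W' (i+1) ω - W' i ω | ℱ i]
          =ᵐ[μ] {ω | i < τs ω}.indicator (μ[fun ω => W' (i+1) ω - W' i ω | ℱ i]) :=
        condExp_indicator hdiffint hind_meas
      have e3 : μ[fun ω => W' (i+1) ω - W' i ω | ℱ i]
          =ᵐ[μ] fun ω => (μ[W' (i+1) | ℱ i]) ω - W' i ω := by
        refine (condExp_sub (m := ℱ i) (hWint (i+1)) (hWint i)).trans ?_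
        have e4 : μ[W' i | ℱ i] = W' i :=
          condExp_of_stronglyMeasurable (ℱ.le i) (hWad i) (hWint i)
        rw [e4]
        exact Filter.EventuallyEq.rfl
      rw [e1]
      filter_upwards [e2, e3] with ω h2 h3
      simp only [Pi.add_apply, h2]
      by_cases hmem : ω ∈ {ω | i < τs ω}
      · simp only [Set.indicator_of_mem hmem, h3]
      · simp only [Set.indicator_of_notMem hmem]
    filter_upwards [hce] with ω hω
    rw [hω]
    have hpos : 0 ≤ {ω | i < τs ω}.indicator
        (fun ω => (μ[W' (i+1) | ℱ i]) ω - W' i ω) ω := by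
      by_cases hmem : ω ∈ {ω | i < τs ω}
      · rw [Set.indicator_of_mem hmem]
        obtain ⟨h1, h2⟩ := hτs_lt i ω hmem
        have h3 := Stmt17Aux.W_le_condexp h1 ω h2
        linarith
      · rw [Set.indicator_of_notMem hmem]
    linarith
  have hYsub : Submartingale Y ℱ μ := submartingale_nat hYad hYint hYstep
  -- supermartingale up to ρs
  set Z := MeasureTheory.stoppedProcess W' (fun ω => (ρs ω : WithTop ℕ)) with hZdef
  have hZad : StronglyAdapted ℱ Z := StronglyAdapted.stoppedProcess_of_discrete hWad hρs_st
  have hZint : ∀ i, Integrable (Z i) μ := by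
    intro i
    have h1 : Z i = stoppedValue W' fun ω => min (i : WithTop ℕ) (ρs ω) := rfl
    rw [h1]
    exact integrable_stoppedValue ℕ ((isStoppingTime_const ℱ i).min hρs_st) hWint
      (fun ω => min_le_left _ _)
  have hZstep : ∀ i, μ[Z (i+1) | ℱ i] ≤ᵐ[μ] Z i := by
    intro i
    have hind_meas : MeasurableSet[ℱ i] {ω | i < ρs ω} := by
      have h1 := (Stmt17Aux.st_le hρs_st i).compl
      have h2 : {ω | ρs ω ≤ i}ᶜ = {ω | i < ρs ω} := by ext ω; simp [not_le]
      rwa [h2] at h1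
    have hdiffint : Integrable (fun ω => W' (i+1) ω - W' i ω) μ :=
      (hWint (i+1)).sub (hWint i)
    have hindint : Integrable ({ω | i < ρs ω}.indicator fun ω => W' (i+1) ω - W' i ω) μ :=
      hdiffint.indicator (ℱ.le i _ hind_meas)
    have hdecomp : Z (i+1) = Z i + {ω | i < ρs ω}.indicator
        fun ω => W' (i+1) ω - W' i ω := by
      funext ω
      by_cases h : i < ρs ω
      · have h1 : min (i+1) (ρs ω) = i + 1 := min_eq_left h
        have h2 : min i (ρs ω) = i := min_eq_left h.le
        simp only [Pi.add_apply, hZdef, Stmt17Aux.sp_apply, h1, h2,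
          Set.indicator_of_mem (show ω ∈ {ω | i < ρs ω} from h)]
        ring
      · push_neg at h
        have h1 : min (i+1) (ρs ω) = ρs ω := min_eq_right (by omega)
        have h2 : min i (ρs ω) = ρs ω := min_eq_right h
        simp only [Pi.add_apply, hZdef, Stmt17Aux.sp_apply, h1, h2,
          Set.indicator_of_notMem (show ω ∉ {ω | i < ρs ω} by simp [not_lt.mpr h])]
        ring
    have hce : μ[Z (i+1) | ℱ i] =ᵐ[μ] fun ω => Z i ω +
        {ω | i < ρs ω}.indicator (fun ω => (μ[W' (i+1) | ℱ i]) ω - W' i ω) ω := by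
      rw [hdecomp]
      refine (condExp_add (hZint i) hindint (ℱ i)).trans ?_
      have e1 : μ[Z i | ℱ i] = Z i :=
        condExp_of_stronglyMeasurable (ℱ.le i) (hZad i) (hZint i)
      have e2 : μ[{ω | i < ρs ω}.indicator fun ω => W' (i+1) ω - W' i ω | ℱ i]
          =ᵐ[μ] {ω | i < ρs ω}.indicator (μ[fun ω => W' (i+1) ω - W' i ω | ℱ i]) :=
        condExp_indicator hdiffint hind_meas
      have e3 : μ[fun ω => W' (i+1) ω - W' i ω | ℱ i]
          =ᵐ[μ] fun ω => (μ[W' (i+1) | ℱ i]) ω - W' i ω := by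
        refine (condExp_sub (m := ℱ i) (hWint (i+1)) (hWint i)).trans ?_
        have e4 : μ[W' i | ℱ i] = W' i :=
          condExp_of_stronglyMeasurable (ℱ.le i) (hWad i) (hWint i)
        rw [e4]
        exact Filter.EventuallyEq.rfl
      rw [e1]
      filter_upwards [e2, e3] with ω h2 h3
      simp only [Pi.add_apply, h2]
      by_cases hmem : ω ∈ {ω | i < ρs ω}
      · simp only [Set.indicator_of_mem hmem, h3]
      · simp only [Set.indicator_of_notMem hmem]
    filter_upwards [hce, hfg i] with ω hω hgfω
    rw [hω]
    have hneg : {ω | i < ρs ω}.indicator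
        (fun ω => (μ[W' (i+1) | ℱ i]) ω - W' i ω) ω ≤ 0 := by
      by_cases hmem : ω ∈ {ω | i < ρs ω}
      · rw [Set.indicator_of_mem hmem]
        obtain ⟨h1, h2⟩ := hρs_lt i ω hmem
        have h3 := Stmt17Aux.condExp_le_W h1 ω hgfω h2
        linarith
      · rw [Set.indicator_of_notMem hmem]
    linarith
  have hZsup : Supermartingale Z ℱ μ := supermartingale_nat hZad hZint hZstep
  set V0 := ∫ ω, W' 0 ω ∂μ with hV0def
  -- the two key claims
  have hclaim2 : ∀ {ρ : Ω → ℕ}, ρ ∈ 𝒯 → V0 ≤ D ρ τs := by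
    intro ρ hρ
    obtain ⟨hρ1, hρ2⟩ := hmemT hρ
    have hπ : IsStoppingTime ℱ fun ω => ((min (ρ ω) (τs ω) : ℕ) : WithTop ℕ) := by
      have := hρ1.min hτs_st; exact this
    have hsm := hYsub.expected_stoppedValue_mono (τ := fun _ => ((0 : ℕ) : WithTop ℕ))
      (isStoppingTime_const ℱ 0) hπ
      (fun ω => WithTop.coe_le_coe.mpr (Nat.zero_le _)) (N := T)
      (fun ω => WithTop.coe_le_coe.mpr (le_trans (min_le_right _ _) (hτs_le ω)))
    have e0 : stoppedValue Y (fun _ => ((0 : ℕ) : WithTop ℕ)) = W' 0 := by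
      funext ω
      simp only [Stmt17Aux.sv_apply, hYdef, Stmt17Aux.sp_apply, Nat.zero_min]
    have e1 : stoppedValue Y (fun ω => ((min (ρ ω) (τs ω) : ℕ) : WithTop ℕ)) =
        fun ω => W' (min (ρ ω) (τs ω)) ω := by
      funext ω
      simp only [Stmt17Aux.sv_apply, hYdef, Stmt17Aux.sp_apply]
      congr 1
      omega
    rw [e0, e1] at hsm
    have hint1 : Integrable (fun ω => W' (min (ρ ω) (τs ω)) ω) μ := by
      have h1 : (fun ω => W' (min (ρ ω) (τs ω)) ω)
          = stoppedValue W' fun ω => ((min (ρ ω) (τs ω) : ℕ) : WithTop ℕ) := rfl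
      rw [h1]
      exact integrable_stoppedValue ℕ hπ hWint (N := T)
        fun ω => WithTop.coe_le_coe.mpr (le_trans (min_le_right _ _) (hτs_le ω))
    have hcomp : (fun ω => W' (min (ρ ω) (τs ω)) ω) ≤ᵐ[μ] payoff ρ τs := by
      filter_upwards [hWf] with ω hWfω
      by_cases h : ρ ω < τs ω
      · simp only [hpayoff, if_pos h, min_eq_left h.le]
        exact hWfω _ (hρ2 ω)
      · simp only [hpayoff, if_neg h, min_eq_right (not_lt.mp h)]
        exact le_of_eq (hWτs ω)
    calc V0 ≤ ∫ ω, W' (min (ρ ω) (τs ω)) ω ∂μ := hsm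
      _ ≤ ∫ ω, payoff ρ τs ω ∂μ := integral_mono_ae hint1 (hint_payoff hρ hτs_mem) hcomp
      _ = D ρ τs := (hD' ρ τs).symm
  have hclaim1 : ∀ {τ : Ω → ℕ}, τ ∈ 𝒯 → D ρs τ ≤ V0 := by
    intro τ hτ
    obtain ⟨hτ1, hτ2⟩ := hmemT hτ
    have hπ : IsStoppingTime ℱ fun ω => ((min (τ ω) (ρs ω) : ℕ) : WithTop ℕ) := by
      have := hτ1.min hρs_st; exact this
    have hsm := hZsup.neg.expected_stoppedValue_mono (τ := fun _ => ((0 : ℕ) : WithTop ℕ))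
      (isStoppingTime_const ℱ 0) hπ
      (fun ω => WithTop.coe_le_coe.mpr (Nat.zero_le _)) (N := T)
      (fun ω => WithTop.coe_le_coe.mpr (le_trans (min_le_right _ _) (hρs_le ω)))
    have e0 : stoppedValue (-Z) (fun _ => ((0 : ℕ) : WithTop ℕ)) = fun ω => -(W' 0 ω) := by
      funext ω
      simp only [Stmt17Aux.sv_apply, Pi.neg_apply, hZdef, Stmt17Aux.sp_apply, Nat.zero_min]
    have e1 : stoppedValue (-Z) (fun ω => ((min (τ ω) (ρs ω) : ℕ) : WithTop ℕ)) =
        fun ω => -(W' (min (τ ω) (ρs ω)) ω) := by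
      funext ω
      simp only [Stmt17Aux.sv_apply, Pi.neg_apply, hZdef, Stmt17Aux.sp_apply]
      congr 2
      omega
    rw [e0, e1] at hsm
    have h2 : ∫ ω, W' (min (τ ω) (ρs ω)) ω ∂μ ≤ V0 := by
      have hn1 : ∫ ω, -(W' 0 ω) ∂μ = -V0 := integral_neg _
      have hn2 : ∫ ω, -(W' (min (τ ω) (ρs ω)) ω) ∂μ
          = -∫ ω, W' (min (τ ω) (ρs ω)) ω ∂μ := integral_neg _
      rw [hn1, hn2] at hsm
      linarith
    have hint1 : Integrable (fun ω => W' (min (τ ω) (ρs ω)) ω) μ := by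
      have h1 : (fun ω => W' (min (τ ω) (ρs ω)) ω)
          = stoppedValue W' fun ω => ((min (τ ω) (ρs ω) : ℕ) : WithTop ℕ) := rfl
      rw [h1]
      exact integrable_stoppedValue ℕ hπ hWint (N := T)
        fun ω => WithTop.coe_le_coe.mpr (le_trans (min_le_right _ _) (hρs_le ω))
    have hcomp : payoff ρs τ ≤ᵐ[μ] fun ω => W' (min (τ ω) (ρs ω)) ω := by
      refine ae_of_all _ fun ω => ?_
      by_cases h : ρs ω < τ ω
      · simp only [hpayoff, if_pos h, min_eq_right h.le]
        exact hfρs ω (lt_of_lt_of_le h (hτ2 ω))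
      · simp only [hpayoff, if_neg h, min_eq_left (not_lt.mp h)]
        exact hgW _ (hτ2 ω) ω
    calc D ρs τ = ∫ ω, payoff ρs τ ω ∂μ := hD' ρs τ
      _ ≤ ∫ ω, W' (min (τ ω) (ρs ω)) ω ∂μ :=
          integral_mono_ae (hint_payoff hρs_mem hτ) hint1 hcomp
      _ ≤ V0 := h2
  -- sup/inf plumbing
  have hSVle : ∀ ρ : Ω → ℕ, (⨆ τ : ↥𝒯, D ρ τ.1) ≤ C := fun ρ =>
    ciSup_le fun τ => hDle _ _
  have hSVge : ∀ ρ : Ω → ℕ, -C ≤ ⨆ τ : ↥𝒯, D ρ τ.1 := fun ρ =>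
    le_ciSup_of_le (Stmt17Aux.bddA (fun τ : ↥𝒯 => D ρ τ.1) fun τ => hDle _ _) ⟨_, hzero_mem⟩ (hDge _ _)
  have hIVle : ∀ τ : Ω → ℕ, (⨅ ρ : ↥𝒯, D ρ.1 τ) ≤ C := fun τ =>
    ciInf_le_of_le (Stmt17Aux.bddB (fun ρ : ↥𝒯 => D ρ.1 τ) fun ρ => hDge _ _) ⟨_, hzero_mem⟩ (hDle _ _)
  have hIVge : ∀ τ : Ω → ℕ, -C ≤ ⨅ ρ : ↥𝒯, D ρ.1 τ := fun τ =>
    le_ciInf fun ρ => hDge _ _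
  have hVle : (⨅ ρ : ↥𝒯, ⨆ τ : ↥𝒯, D ρ.1 τ.1) ≤ V0 := by
    refine ciInf_le_of_le (Stmt17Aux.bddB (fun ρ : ↥𝒯 => ⨆ τ : ↥𝒯, D ρ.1 τ.1) fun ρ => hSVge _) ⟨ρs, hρs_mem⟩ ?_
    exact ciSup_le fun τ => hclaim1 τ.2
  have hvge : V0 ≤ ⨆ τ : ↥𝒯, ⨅ ρ : ↥𝒯, D ρ.1 τ.1 := by
    refine le_ciSup_of_le (Stmt17Aux.bddA (fun τ : ↥𝒯 => ⨅ ρ : ↥𝒯, D ρ.1 τ.1) fun τ => hIVle _) ⟨τs, hτs_mem⟩ ?_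
    exact le_ciInf fun ρ => hclaim2 ρ.2
  have hvV : (⨆ τ : ↥𝒯, ⨅ ρ : ↥𝒯, D ρ.1 τ.1) ≤ ⨅ ρ : ↥𝒯, ⨆ τ : ↥𝒯, D ρ.1 τ.1 := by
    refine le_ciInf fun ρ => ciSup_le fun τ => ?_
    exact le_trans (ciInf_le (Stmt17Aux.bddB (fun ρ' : ↥𝒯 => D ρ'.1 τ.1) fun ρ' => hDge _ _) ρ)
      (le_ciSup (Stmt17Aux.bddA (fun τ' : ↥𝒯 => D ρ.1 τ'.1) fun τ' => hDle _ _) τ)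
  have hVv : (⨅ ρ : ↥𝒯, ⨆ τ : ↥𝒯, D ρ.1 τ.1) = ⨆ τ : ↥𝒯, ⨅ ρ : ↥𝒯, D ρ.1 τ.1 :=
    le_antisymm (hVle.trans hvge) hvV
  have hVV0 : (⨅ ρ : ↥𝒯, ⨆ τ : ↥𝒯, D ρ.1 τ.1) = V0 :=
    le_antisymm hVle (hvge.trans hvV)
  -- constant strategies
  have hconstII : ∀ {ρ₀ : Ω → ℕ}, ρ₀ ∈ 𝒯 → TypeII (fun _ => ρ₀) := by
    intro ρ₀ h
    rw [hTypeII]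
    refine ⟨fun σ _ => h, fun σ₁ _ σ₂ _ ω => ?_⟩
    rcases lt_or_ge (ρ₀ ω) (min (σ₁ ω) (σ₂ ω)) with h' | h'
    · exact Or.inl ⟨rfl, h'⟩
    · exact Or.inr (by simpa using h')
  have hconstI : ∀ {τ₀ : Ω → ℕ}, τ₀ ∈ 𝒯 → TypeI (fun _ => τ₀) := by
    intro τ₀ h
    rw [hTypeI]
    refine ⟨fun σ _ => h, fun σ₁ _ σ₂ _ ω => ?_⟩
    rcases le_or_gt (τ₀ ω) (min (σ₁ ω) (σ₂ ω)) with h' | h'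
    · exact Or.inl ⟨rfl, h'⟩
    · exact Or.inr (by simpa using h')
  haveI hIIne : Nonempty {ρ : (Ω → ℕ) → Ω → ℕ // TypeII ρ} :=
    ⟨⟨fun _ => (fun _ => 0), hconstII hzero_mem⟩⟩
  haveI hIne : Nonempty {τ : (Ω → ℕ) → Ω → ℕ // TypeI τ} :=
    ⟨⟨fun _ => (fun _ => 0), hconstI hzero_mem⟩⟩
  refine ⟨?_, ?_, ?_⟩
  · -- first equality
    refine le_antisymm ?_ ?_
    · refine le_ciInf fun ρ₀ => ?_
      refine ciInf_le_of_le ?_ ⟨fun _ => ρ₀.1, hconstII ρ₀.2⟩ le_rfl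
      refine ⟨-C, ?_⟩
      rintro x ⟨ρ, rfl⟩
      exact le_ciSup_of_le (Stmt17Aux.bddA (fun τ : ↥𝒯 => D (ρ.1 τ.1) τ.1) fun τ => hDle _ _) ⟨_, hzero_mem⟩ (hDge _ _)
    · refine le_ciInf fun ρ => ?_
      obtain ⟨hmap, _⟩ := (hTypeII ρ.1).mp ρ.2
      calc (⨅ ρ : ↥𝒯, ⨆ τ : ↥𝒯, D ρ.1 τ.1) = V0 := hVV0
        _ ≤ D (ρ.1 τs) τs := hclaim2 (hmap τs hτs_mem)
        _ ≤ ⨆ τ : ↥𝒯, D (ρ.1 τ.1) τ.1 :=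
            le_ciSup (Stmt17Aux.bddA (fun τ : ↥𝒯 => D (ρ.1 τ.1) τ.1) fun τ => hDle _ _) ⟨τs, hτs_mem⟩
  · -- second equality
    refine le_antisymm ?_ ?_
    · refine ciSup_le fun τ => ?_
      obtain ⟨hmap, _⟩ := (hTypeI τ.1).mp τ.2
      calc (⨅ ρ : ↥𝒯, D ρ.1 (τ.1 ρ.1))
          ≤ D ρs (τ.1 ρs) := ciInf_le (Stmt17Aux.bddB (fun ρ : ↥𝒯 => D ρ.1 (τ.1 ρ.1)) fun ρ => hDge _ _) ⟨ρs, hρs_mem⟩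
        _ ≤ V0 := hclaim1 (hmap ρs hρs_mem)
        _ = _ := hVV0.symm
    · calc (⨅ ρ : ↥𝒯, ⨆ τ : ↥𝒯, D ρ.1 τ.1)
          = ⨆ τ : ↥𝒯, ⨅ ρ : ↥𝒯, D ρ.1 τ.1 := hVv
        _ ≤ ⨆ τI : {τ : (Ω → ℕ) → Ω → ℕ // TypeI τ}, ⨅ ρ : ↥𝒯, D ρ.1 (τI.1 ρ.1) := by
            refine ciSup_le fun τ₀ => ?_
            refine le_ciSup_of_le ?_ ⟨fun _ => τ₀.1, hconstI τ₀.2⟩ le_rfl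
            refine ⟨C, ?_⟩
            rintro x ⟨τI, rfl⟩
            exact ciInf_le_of_le (Stmt17Aux.bddB (fun ρ : ↥𝒯 => D ρ.1 (τI.1 ρ.1)) fun ρ => hDge _ _) ⟨_, hzero_mem⟩ (hDle _ _)
  · exact hVv
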